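/- Let T, S be bounded linear operators on H admitting A-adjoints T♯, S♯ respectively. Set β₁ = ‖S‖_A·√( w_A(T)² − |‖Re_A(T) + Im_A(T)‖_A² − ‖Re_A(T) − Im_A(T)‖_A²|/4 ) and β₂ = ‖T‖_A·√( w_A(S)² − |‖Re_A(S) + Im_A(S)‖_A² − ‖Re_A(S) − Im_A(S)‖_A²|/4 ). Then w_A(T∘S ± S∘T) ≤ 2√2 · min{β₁, β₂}, for both choices of sign. -/

import Mathlib

noncomputable section
set_option linter.unusedSectionVars false

open Complex ContinuousLinearMap

variable {H : Type*} [NormedAddCommGroup H] [InnerProductSpace ℂ H] [CompleteSpace H]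

/-- The `A`-inner product `⟨x, y⟩_A = ⟨A x, y⟩`. -/
def innA (A : H →L[ℂ] H) (x y : H) : ℂ := @inner ℂ _ _ (A x) y

/-- The `A`-seminorm `‖x‖_A = √⟨A x, x⟩`. -/
def vnormA (A : H →L[ℂ] H) (x : H) : ℝ := Real.sqrt (innA A x x).re

/-- The `A`-operator seminorm `‖T‖_A = sup {‖T x‖_A : ‖x‖_A = 1}`. -/
def opnormA (A T : H →L[ℂ] H) : ℝ :=
  sSup {r : ℝ | ∃ x : H, vnormA A x = 1 ∧ r = vnormA A (T x)}

/-- The `A`-numerical radius `w_A(T) = sup {|⟨T x, x⟩_A| : ‖x‖_A = 1}`. -/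
def wA (A T : H →L[ℂ] H) : ℝ :=
  sSup {r : ℝ | ∃ x : H, vnormA A x = 1 ∧ r = ‖innA A (T x) x‖}

/-- The `A`-numerical range `W_A(T) = {⟨T x, x⟩_A : ‖x‖_A = 1}`. -/
def WA (A T : H →L[ℂ] H) : Set ℂ :=
  {z : ℂ | ∃ x : H, vnormA A x = 1 ∧ z = innA A (T x) x}

/-- `Re_A(T) = (T + T♯)/2`, given an `A`-adjoint `Ts` of `T`. -/
def ReA (T Ts : H →L[ℂ] H) : H →L[ℂ] H := (2 : ℂ)⁻¹ • (T + Ts)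

/-- `Im_A(T) = (T - T♯)/(2i)`, given an `A`-adjoint `Ts` of `T`. -/
def ImA (T Ts : H →L[ℂ] H) : H →L[ℂ] H := (2 * Complex.I)⁻¹ • (T - Ts)

/-- `Ts` is an `A`-adjoint of `T`, i.e. `A ∘ Ts = T* ∘ A`. -/
def IsAAdjoint (A T Ts : H →L[ℂ] H) : Prop :=
  A.comp Ts = (ContinuousLinearMap.adjoint T).comp A

namespace Stmt19Aux

variable {A T Ts S Ss X : H →L[ℂ] H}

/-! ### Basic `innA` lemmas -/

lemma innA_add_left (A : H →L[ℂ] H) (x y z : H) :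
    innA A (x + y) z = innA A x z + innA A y z := by
  simp [innA, inner_add_left]

lemma innA_add_right (A : H →L[ℂ] H) (x y z : H) :
    innA A x (y + z) = innA A x y + innA A x z := by
  simp [innA, inner_add_right]

lemma innA_sub_left (A : H →L[ℂ] H) (x y z : H) :
    innA A (x - y) z = innA A x z - innA A y z := by
  simp [innA, inner_sub_left]

lemma innA_sub_right (A : H →L[ℂ] H) (x y z : H) :
    innA A x (y - z) = innA A x y - innA A x z := by
  simp [innA, inner_sub_right]

lemma innA_smul_left (A : H →L[ℂ] H) (c : ℂ) (x z : H) :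
    innA A (c • x) z = (starRingEnd ℂ) c * innA A x z := by
  simp [innA, inner_smul_left, mul_comm]

lemma innA_smul_right (A : H →L[ℂ] H) (c : ℂ) (x z : H) :
    innA A x (c • z) = c * innA A x z := by
  simp [innA, inner_smul_right]

lemma innA_neg_left (A : H →L[ℂ] H) (x z : H) :
    innA A (-x) z = - innA A x z := by
  simp [innA]

/-- The semi-inner-product core structure attached to a positive operator. -/
def coreA (hA : A.IsPositive) : PreInnerProductSpace.Core ℂ H where
  inner := innA A
  conj_inner_symm := fun x y => by
    simp only [innA]
    rw [inner_conj_symm]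
    exact (hA.inner_left_eq_inner_right x y).symm
  re_inner_nonneg := fun x => hA.2 x
  add_left := fun x y z => by simp [innA, inner_add_left]
  smul_left := fun x y r => by simp [innA, inner_smul_left, mul_comm]

lemma innA_conj (hA : A.IsPositive) (x y : H) :
    innA A y x = (starRingEnd ℂ) (innA A x y) := by
  have h := (coreA hA).conj_inner_symm y x
  have h' : (starRingEnd ℂ) (innA A x y) = innA A y x := h
  exact h'.symm

lemma re_innA_nonneg (hA : A.IsPositive) (x : H) : 0 ≤ (innA A x x).re := hA.2 x

lemma vnormA_nonneg (A : H →L[ℂ] H) (x : H) : 0 ≤ vnormA A x := Real.sqrt_nonneg _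

lemma vnormA_sq (hA : A.IsPositive) (x : H) : vnormA A x ^ 2 = (innA A x x).re :=
  Real.sq_sqrt (re_innA_nonneg hA x)

lemma abs_innA_le (hA : A.IsPositive) (x y : H) :
    ‖innA A x y‖ ≤ vnormA A x * vnormA A y := by
  have h : ‖innA A x y‖ * ‖innA A y x‖ ≤ (innA A x x).re * (innA A y y).re :=
    @InnerProductSpace.Core.inner_mul_inner_self_le ℂ H _ _ _ (coreA hA) x y
  rw [innA_conj hA x y] at h
  simp only [RingHomIsometric.norm_map] at h
  have h2 : ‖innA A x y‖ ^ 2 ≤ (vnormA A x * vnormA A y) ^ 2 := by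
    rw [mul_pow, vnormA_sq hA, vnormA_sq hA]
    calc ‖innA A x y‖ ^ 2 = ‖innA A x y‖ * ‖innA A x y‖ := by
          rw [sq]
      _ ≤ _ := h
  have h3 := Real.sqrt_le_sqrt h2
  rwa [Real.sqrt_sq (norm_nonneg _), Real.sqrt_sq (mul_nonneg (vnormA_nonneg A x) (vnormA_nonneg A y))] at h3

lemma vnormA_smul (hA : A.IsPositive) (c : ℂ) (x : H) :
    vnormA A (c • x) = ‖c‖ * vnormA A x := by
  have : (innA A (c • x) (c • x)).re = ‖c‖ ^ 2 * (innA A x x).re := by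
    rw [innA_smul_left, innA_smul_right, ← mul_assoc, Complex.conj_mul', ← Complex.ofReal_pow,
      Complex.re_ofReal_mul]
  rw [vnormA, this, Real.sqrt_mul (by positivity), vnormA, Real.sqrt_sq (by positivity)]

/-! ### A-adjoint lemmas -/

lemma aadj_apply_eq (h : IsAAdjoint A T Ts) (z : H) :
    A (Ts z) = (ContinuousLinearMap.adjoint T) (A z) := by
  have := congrArg (fun (f : H →L[ℂ] H) => f z) h
  simpa using this

lemma innA_move (hA : A.IsPositive) (h : IsAAdjoint A T Ts) (y z : H) :
    innA A (T y) z = innA A y (Ts z) := by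
  simp only [innA]
  calc @inner ℂ _ _ (A (T y)) z = @inner ℂ _ _ (T y) (A z) := hA.inner_left_eq_inner_right (T y) z
    _ = @inner ℂ _ _ y ((ContinuousLinearMap.adjoint T) (A z)) := by
        rw [ContinuousLinearMap.adjoint_inner_right]
    _ = @inner ℂ _ _ y (A (Ts z)) := by rw [aadj_apply_eq h]
    _ = @inner ℂ _ _ (A y) (Ts z) := (hA.inner_left_eq_inner_right y (Ts z)).symm

lemma aadj_symm (hA : A.IsPositive) (h : IsAAdjoint A T Ts) : IsAAdjoint A Ts T := by
  unfold IsAAdjoint at h ⊢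
  have h2 := congrArg (fun f : H →L[ℂ] H => ContinuousLinearMap.adjoint f) h
  simp only [adjoint_comp, adjoint_adjoint, hA.isSelfAdjoint.adjoint_eq] at h2
  exact h2.symm

lemma aadj_add (h1 : IsAAdjoint A T Ts) (h2 : IsAAdjoint A S Ss) :
    IsAAdjoint A (T + S) (Ts + Ss) := by
  unfold IsAAdjoint at *
  have hadj : adjoint (T + S) = adjoint T + adjoint S := by
    rw [← ContinuousLinearMap.star_eq_adjoint, star_add]
    rfl
  rw [comp_add, h1, h2, hadj, add_comp]

lemma aadj_sub (h1 : IsAAdjoint A T Ts) (h2 : IsAAdjoint A S Ss) :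
    IsAAdjoint A (T - S) (Ts - Ss) := by
  unfold IsAAdjoint at *
  have hadj : adjoint (T - S) = adjoint T - adjoint S := by
    rw [← ContinuousLinearMap.star_eq_adjoint, star_sub]
    rfl
  rw [comp_sub, h1, h2, hadj, sub_comp]

lemma aadj_smul (h : IsAAdjoint A T Ts) (c : ℂ) :
    IsAAdjoint A (c • T) ((starRingEnd ℂ c) • Ts) := by
  unfold IsAAdjoint at *
  have hadj : adjoint (c • T) = (starRingEnd ℂ c) • adjoint T := by
    rw [← ContinuousLinearMap.star_eq_adjoint, star_smul]
    rfl
  rw [comp_smul, h, hadj, smul_comp]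

lemma aadj_comp (h1 : IsAAdjoint A T Ts) (h2 : IsAAdjoint A S Ss) :
    IsAAdjoint A (T.comp S) (Ss.comp Ts) := by
  unfold IsAAdjoint at *
  calc A.comp (Ss.comp Ts) = (A.comp Ss).comp Ts := by rw [comp_assoc]
    _ = ((adjoint S).comp A).comp Ts := by rw [h2]
    _ = (adjoint S).comp (A.comp Ts) := by rw [comp_assoc]
    _ = (adjoint S).comp ((adjoint T).comp A) := by rw [h1]
    _ = (adjoint (T.comp S)).comp A := by rw [← comp_assoc, ← adjoint_comp]

lemma aadj_one : IsAAdjoint A 1 1 := by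
  unfold IsAAdjoint
  have : (adjoint (1 : H →L[ℂ] H)) = 1 := by
    rw [← ContinuousLinearMap.star_eq_adjoint, star_one]
  rw [this]
  rfl

lemma aadj_pow (h : IsAAdjoint A X X) (n : ℕ) : IsAAdjoint A (X ^ n) (X ^ n) := by
  induction n with
  | zero => simpa using aadj_one
  | succ n ih =>
      have h1 : IsAAdjoint A (X.comp (X ^ n)) ((X ^ n).comp X) := aadj_comp h ih
      have e1 : X.comp (X ^ n) = X ^ (n + 1) := by
        rw [← ContinuousLinearMap.mul_def, ← pow_succ']
      have e2 : (X ^ n).comp X = X ^ (n + 1) := by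
        rw [← ContinuousLinearMap.mul_def, ← pow_succ]
      rwa [e1, e2] at h1

lemma ReA_isAAdjoint (hA : A.IsPositive) (h : IsAAdjoint A T Ts) :
    IsAAdjoint A (ReA T Ts) (ReA T Ts) := by
  have h1 := aadj_smul (aadj_add h (aadj_symm hA h)) ((2 : ℂ)⁻¹)
  have : (starRingEnd ℂ) (2 : ℂ)⁻¹ • (Ts + T) = ReA T Ts := by
    rw [ReA]
    rw [map_inv₀, Complex.conj_ofNat, add_comm Ts T]
  rwa [this] at h1

lemma ImA_isAAdjoint (hA : A.IsPositive) (h : IsAAdjoint A T Ts) :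
    IsAAdjoint A (ImA T Ts) (ImA T Ts) := by
  have h1 := aadj_smul (aadj_sub h (aadj_symm hA h)) ((2 * Complex.I)⁻¹)
  have : (starRingEnd ℂ) (2 * Complex.I)⁻¹ • (Ts - T) = ImA T Ts := by
    rw [ImA]
    have hc : (starRingEnd ℂ) (2 * Complex.I)⁻¹ = -(2 * Complex.I)⁻¹ := by
      rw [map_inv₀, map_mul, Complex.conj_ofNat, Complex.conj_I, mul_neg, ← neg_inv]
    rw [hc, neg_smul, ← smul_neg, neg_sub]
  rwa [this] at h1

/-! ### Vector decomposition lemmas -/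

lemma I_mul_twoI_inv : Complex.I * (2 * Complex.I)⁻¹ = (2 : ℂ)⁻¹ := by
  rw [mul_inv, ← mul_assoc, mul_comm Complex.I, mul_assoc,
    mul_inv_cancel₀ Complex.I_ne_zero, mul_one]

lemma recompose (u v : H) :
    (2 : ℂ)⁻¹ • (u + v) + Complex.I • ((2 * Complex.I)⁻¹ • (u - v)) = u := by
  rw [smul_smul, I_mul_twoI_inv, ← smul_add, add_add_sub_cancel, ← two_smul ℂ u, smul_smul]
  norm_num

lemma recompose' (u v : H) :
    (2 : ℂ)⁻¹ • (u + v) - Complex.I • ((2 * Complex.I)⁻¹ • (u - v)) = v := by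
  rw [smul_smul, I_mul_twoI_inv, ← smul_sub, add_sub_sub_cancel, ← two_smul ℂ v, smul_smul]
  norm_num

lemma para (hA : A.IsPositive) (u v : H) :
    vnormA A (u + v) ^ 2 + vnormA A (u - v) ^ 2 = 2 * vnormA A u ^ 2 + 2 * vnormA A v ^ 2 := by
  have hc : innA A (u + v) (u + v) + innA A (u - v) (u - v)
      = 2 * innA A u u + 2 * innA A v v := by
    simp only [innA_add_left, innA_add_right, innA_sub_left, innA_sub_right]
    ring
  have := congrArg Complex.re hc
  simp only [Complex.add_re, Complex.mul_re] at this
  rw [vnormA_sq hA, vnormA_sq hA, vnormA_sq hA, vnormA_sq hA]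
  simpa using this

lemma halfsum (hA : A.IsPositive) (u v : H) :
    vnormA A ((2 : ℂ)⁻¹ • (u + v)) ^ 2 + vnormA A ((2 * Complex.I)⁻¹ • (u - v)) ^ 2
      = (vnormA A u ^ 2 + vnormA A v ^ 2) / 2 := by
  have h1 : ‖(2 : ℂ)⁻¹‖ = 1 / 2 := by norm_num
  have h2 : ‖(2 * Complex.I)⁻¹‖ = 1 / 2 := by
    rw [norm_inv, norm_mul]
    simp
  rw [vnormA_smul hA, vnormA_smul hA, h1, h2, mul_pow, mul_pow]
  have := para hA u v
  nlinarith [this]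

/-! ### Fundamental boundedness -/

lemma sq_re_le_sq_abs (z : ℂ) : z.re ^ 2 ≤ ‖z‖ ^ 2 := by
  rw [Complex.sq_norm, Complex.normSq_apply]
  nlinarith [sq_nonneg z.im]

lemma abs_innA_sq_le (hA : A.IsPositive) (u v : H) :
    ‖innA A u v‖ ^ 2 ≤ (innA A u u).re * (innA A v v).re := by
  have h := abs_innA_le hA u v
  have h2 := mul_le_mul h h (norm_nonneg _)
    (mul_nonneg (vnormA_nonneg A u) (vnormA_nonneg A v))
  calc ‖innA A u v‖ ^ 2
      ≤ (vnormA A u * vnormA A v) ^ 2 := by rw [sq, sq]; exact h2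
    _ = (innA A u u).re * (innA A v v).re := by
        rw [mul_pow, vnormA_sq hA, vnormA_sq hA]

lemma innA_apply_le (hA : A.IsPositive) (hT : IsAAdjoint A T Ts) (x : H) :
    (innA A (T x) (T x)).re ≤ ‖Ts.comp T‖ * (innA A x x).re := by
  set R : H →L[ℂ] H := Ts.comp T with hRdef
  have hR : IsAAdjoint A R R := aadj_comp (aadj_symm hA hT) hT
  have hpow : ∀ n : ℕ, IsAAdjoint A (R ^ n) (R ^ n) := fun n => aadj_pow hR n
  set φ : ℕ → ℝ := fun n => (innA A ((R ^ n) x) x).re with hφdef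
  have hφ0 : φ 0 = (innA A x x).re := by simp [hφdef]
  have hφ1 : φ 1 = (innA A (T x) (T x)).re := by
    have h' : innA A (Ts (T x)) x = innA A (T x) (T x) :=
      innA_move hA (aadj_symm hA hT) (T x) x
    simp only [hφdef, pow_one, hRdef, ContinuousLinearMap.comp_apply]
    rw [h']
  have hφ0n : 0 ≤ φ 0 := re_innA_nonneg hA x
  have hφ1n : 0 ≤ φ 1 := by rw [hφ1]; exact re_innA_nonneg hA (T x)
  have hkey : ∀ n : ℕ, φ n ^ 2 ≤ φ (2 * n) * φ 0 := by
    intro n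
    have h1 : φ n ^ 2 ≤ ‖innA A ((R ^ n) x) x‖ ^ 2 := sq_re_le_sq_abs _
    have h2 := abs_innA_sq_le hA ((R ^ n) x) x
    have h3 : (innA A ((R ^ n) x) ((R ^ n) x)).re = φ (2 * n) := by
      rw [innA_move hA (hpow n) x ((R ^ n) x)]
      have he : (R ^ n) ((R ^ n) x) = (R ^ (2 * n)) x := by
        rw [two_mul, pow_add]
        simp [ContinuousLinearMap.mul_apply]
      rw [he, innA_conj hA]
      simp [hφdef]
    rw [h3] at h2
    exact h1.trans h2
  have hgrow : ∀ n : ℕ, φ (2 ^ n) ≤ (‖A‖ * ‖x‖ ^ 2) * ‖R‖ ^ (2 ^ n) := by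
    intro n
    have h1 : φ (2 ^ n) ≤ ‖innA A ((R ^ 2 ^ n) x) x‖ := Complex.re_le_norm _
    have h2 : ‖innA A ((R ^ 2 ^ n) x) x‖ ≤ ‖A ((R ^ 2 ^ n) x)‖ * ‖x‖ := by
      rw [innA]
      exact norm_inner_le_norm _ _
    have h3 : ‖A ((R ^ 2 ^ n) x)‖ ≤ ‖A‖ * (‖R ^ 2 ^ n‖ * ‖x‖) := by
      calc ‖A ((R ^ 2 ^ n) x)‖ ≤ ‖A‖ * ‖(R ^ 2 ^ n) x‖ := A.le_opNorm _
        _ ≤ ‖A‖ * (‖R ^ 2 ^ n‖ * ‖x‖) := by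
            gcongr
            exact (R ^ 2 ^ n).le_opNorm x
    have h4 : ‖R ^ 2 ^ n‖ ≤ ‖R‖ ^ 2 ^ n := norm_pow_le' R ((by positivity))
    calc φ (2 ^ n) ≤ ‖A ((R ^ 2 ^ n) x)‖ * ‖x‖ := h1.trans h2
      _ ≤ (‖A‖ * (‖R ^ 2 ^ n‖ * ‖x‖)) * ‖x‖ := by gcongr
      _ ≤ (‖A‖ * (‖R‖ ^ 2 ^ n * ‖x‖)) * ‖x‖ := by gcongr
      _ = (‖A‖ * ‖x‖ ^ 2) * ‖R‖ ^ (2 ^ n) := by ring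
  have hmain : ∀ n : ℕ, φ 1 ^ (2 ^ n) ≤ φ (2 ^ n) * φ 0 ^ (2 ^ n - 1) := by
    intro n
    induction n with
    | zero => simp
    | succ n ih =>
        have h2n : 1 ≤ 2 ^ n := Nat.one_le_two_pow
        have e1 : (2 : ℕ) ^ (n + 1) = 2 * 2 ^ n := by ring
        have hstep : (φ 1 ^ 2 ^ n) ^ 2 ≤ (φ (2 ^ n) * φ 0 ^ (2 ^ n - 1)) ^ 2 := by
          apply pow_le_pow_left₀ (pow_nonneg hφ1n _) ih
        have hkk := hkey (2 ^ n)
        have hφ0pow : (0:ℝ) ≤ φ 0 ^ (2 * (2 ^ n - 1)) := pow_nonneg hφ0n _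
        calc φ 1 ^ 2 ^ (n + 1) = (φ 1 ^ 2 ^ n) ^ 2 := by
              rw [← pow_mul, e1, Nat.mul_comm]
          _ ≤ (φ (2 ^ n) * φ 0 ^ (2 ^ n - 1)) ^ 2 := hstep
          _ = φ (2 ^ n) ^ 2 * φ 0 ^ (2 * (2 ^ n - 1)) := by
              rw [mul_pow, ← pow_mul, Nat.mul_comm (2^n - 1) 2]
          _ ≤ (φ (2 * 2 ^ n) * φ 0) * φ 0 ^ (2 * (2 ^ n - 1)) := by
              exact mul_le_mul_of_nonneg_right hkk hφ0pow
          _ = φ (2 ^ (n + 1)) * φ 0 ^ (2 ^ (n + 1) - 1) := by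
              rw [← e1, mul_assoc]
              congr 1
              rw [← pow_succ']
              congr 1
              omega
  rw [← hφ1, ← hφ0]
  rcases eq_or_lt_of_le hφ0n with h0 | hφ0pos
  · have hk := hkey 1
    rw [← h0] at hk ⊢
    have hk2 : φ 1 ^ 2 ≤ 0 := by simpa using hk
    nlinarith [hφ1n]
  · rcases eq_or_lt_of_le (norm_nonneg R) with hR0 | hRpos
    · have hRz : R = 0 := by rwa [eq_comm, norm_eq_zero] at hR0
      have hφ1z : φ 1 = 0 := by simp [hφdef, hRz, innA]
      rw [hφ1z, ← hR0, zero_mul]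
    · by_contra hcon
      push_neg at hcon
      set M := ‖A‖ * ‖x‖ ^ 2 with hM
      set q := φ 1 / (‖R‖ * φ 0) with hq
      have hden : 0 < ‖R‖ * φ 0 := mul_pos hRpos hφ0pos
      have hq1 : 1 < q := (one_lt_div hden).2 hcon
      obtain ⟨n, hn⟩ := pow_unbounded_of_one_lt (M / φ 0) hq1
      have h1 : q ^ n ≤ q ^ (2 ^ n) := pow_le_pow_right₀ hq1.le Nat.lt_two_pow_self.le
      have hpow0 : φ 0 ^ (2 ^ n - 1) * φ 0 = φ 0 ^ 2 ^ n := by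
        rw [← pow_succ]
        congr 1
        have h2n : 1 ≤ 2 ^ n := Nat.one_le_two_pow
        omega
      have h2 : q ^ (2 ^ n) ≤ M / φ 0 := by
        rw [hq, div_pow, div_le_div_iff₀ (by positivity) hφ0pos]
        have hb : φ 1 ^ 2 ^ n ≤ (M * ‖R‖ ^ 2 ^ n) * φ 0 ^ (2 ^ n - 1) :=
          (hmain n).trans (mul_le_mul_of_nonneg_right (hgrow n) (pow_nonneg hφ0n _))
        calc φ 1 ^ 2 ^ n * φ 0 ≤ (M * ‖R‖ ^ 2 ^ n) * φ 0 ^ (2 ^ n - 1) * φ 0 :=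
              mul_le_mul_of_nonneg_right hb hφ0n
          _ = (M * ‖R‖ ^ 2 ^ n) * (φ 0 ^ (2 ^ n - 1) * φ 0) := by ring
          _ = (M * ‖R‖ ^ 2 ^ n) * φ 0 ^ 2 ^ n := by rw [hpow0]
          _ = M * (‖R‖ * φ 0) ^ 2 ^ n := by rw [mul_pow]; ring
      linarith


/-! ### Operator seminorm and numerical radius basics -/

lemma vnormA_apply_le (hA : A.IsPositive) (hT : IsAAdjoint A T Ts) (x : H) :
    vnormA A (T x) ≤ Real.sqrt ‖Ts.comp T‖ * vnormA A x := by
  rw [vnormA, vnormA, ← Real.sqrt_mul (norm_nonneg _)]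
  exact Real.sqrt_le_sqrt (innA_apply_le hA hT x)

lemma bdd_op (hA : A.IsPositive) (hT : IsAAdjoint A T Ts) :
    BddAbove {r : ℝ | ∃ x : H, vnormA A x = 1 ∧ r = vnormA A (T x)} := by
  refine ⟨Real.sqrt ‖Ts.comp T‖, ?_⟩
  rintro r ⟨x, hx, rfl⟩
  have h := vnormA_apply_le hA hT x
  rwa [hx, mul_one] at h

lemma bdd_w (hA : A.IsPositive) (hT : IsAAdjoint A T Ts) :
    BddAbove {r : ℝ | ∃ x : H, vnormA A x = 1 ∧ r = ‖innA A (T x) x‖} := by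
  refine ⟨Real.sqrt ‖Ts.comp T‖, ?_⟩
  rintro r ⟨x, hx, rfl⟩
  calc ‖innA A (T x) x‖ ≤ vnormA A (T x) * vnormA A x := abs_innA_le hA _ _
    _ ≤ (Real.sqrt ‖Ts.comp T‖ * vnormA A x) * vnormA A x :=
        mul_le_mul_of_nonneg_right (vnormA_apply_le hA hT x) (vnormA_nonneg A x)
    _ = Real.sqrt ‖Ts.comp T‖ := by rw [hx]; ring

lemma opnormA_nonneg (A T : H →L[ℂ] H) : 0 ≤ opnormA A T := by
  apply Real.sSup_nonneg
  rintro r ⟨x, hx, rfl⟩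
  exact vnormA_nonneg A _

lemma wA_nonneg (A T : H →L[ℂ] H) : 0 ≤ wA A T := by
  apply Real.sSup_nonneg
  rintro r ⟨x, hx, rfl⟩
  exact norm_nonneg _

lemma opnormA_le (hA : A.IsPositive) {C : ℝ} (hC : 0 ≤ C)
    (h : ∀ y : H, vnormA A y = 1 → vnormA A (T y) ≤ C) : opnormA A T ≤ C := by
  apply Real.sSup_le _ hC
  rintro r ⟨x, hx, rfl⟩
  exact h x hx

lemma wA_le (hA : A.IsPositive) {C : ℝ} (hC : 0 ≤ C)
    (h : ∀ y : H, vnormA A y = 1 → ‖innA A (T y) y‖ ≤ C) : wA A T ≤ C := by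
  apply Real.sSup_le _ hC
  rintro r ⟨x, hx, rfl⟩
  exact h x hx

lemma vnormA_op_le (hA : A.IsPositive) (hT : IsAAdjoint A T Ts) (y : H) :
    vnormA A (T y) ≤ opnormA A T * vnormA A y := by
  rcases eq_or_lt_of_le (vnormA_nonneg A y) with h0 | hpos
  · have h1 := vnormA_apply_le hA hT y
    rw [← h0, mul_zero] at h1
    have h2 : vnormA A (T y) = 0 := le_antisymm h1 (vnormA_nonneg A _)
    rw [h2, ← h0, mul_zero]
  · set c : ℝ := vnormA A y with hc
    have hunit : vnormA A (((c⁻¹ : ℝ) : ℂ) • y) = 1 := by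
      rw [vnormA_smul hA, Complex.norm_real, Real.norm_eq_abs, abs_of_pos (inv_pos.2 hpos)]
      exact inv_mul_cancel₀ hpos.ne'
    have hmem : vnormA A (T (((c⁻¹ : ℝ) : ℂ) • y))
        ∈ {r : ℝ | ∃ x : H, vnormA A x = 1 ∧ r = vnormA A (T x)} := ⟨_, hunit, rfl⟩
    have hle := le_csSup (bdd_op hA hT) hmem
    rw [map_smul, vnormA_smul hA, Complex.norm_real, Real.norm_eq_abs, abs_of_pos (inv_pos.2 hpos)] at hle
    have h2 := mul_le_mul_of_nonneg_left hle hpos.le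
    rw [← mul_assoc, mul_inv_cancel₀ hpos.ne', one_mul] at h2
    rw [opnormA, mul_comm]
    exact h2

lemma abs_innA_le_wA (hA : A.IsPositive) (hT : IsAAdjoint A T Ts) (y : H) :
    ‖innA A (T y) y‖ ≤ wA A T * vnormA A y ^ 2 := by
  rcases eq_or_lt_of_le (vnormA_nonneg A y) with h0 | hpos
  · have h1 : ‖innA A (T y) y‖ ≤ vnormA A (T y) * vnormA A y := abs_innA_le hA _ _
    rw [← h0, mul_zero] at h1
    have h2 : ‖innA A (T y) y‖ = 0 := le_antisymm h1 (norm_nonneg _)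
    rw [h2, ← h0]
    simp
  · set c : ℝ := vnormA A y with hc
    have hunit : vnormA A (((c⁻¹ : ℝ) : ℂ) • y) = 1 := by
      rw [vnormA_smul hA, Complex.norm_real, Real.norm_eq_abs, abs_of_pos (inv_pos.2 hpos)]
      exact inv_mul_cancel₀ hpos.ne'
    have hmem : ‖innA A (T (((c⁻¹ : ℝ) : ℂ) • y)) (((c⁻¹ : ℝ) : ℂ) • y)‖
        ∈ {r : ℝ | ∃ x : H, vnormA A x = 1 ∧ r = ‖innA A (T x) x‖} :=
      ⟨_, hunit, rfl⟩
    have hle := le_csSup (bdd_w hA hT) hmem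
    rw [map_smul, innA_smul_left, innA_smul_right, norm_mul, norm_mul] at hle
    rw [Complex.norm_conj, Complex.norm_real, Real.norm_eq_abs, abs_of_pos (inv_pos.2 hpos)] at hle
    have h2 := mul_le_mul_of_nonneg_left hle (mul_pos hpos hpos).le
    calc ‖innA A (T y) y‖
        = (c * c) * (c⁻¹ * (c⁻¹ * ‖innA A (T y) y‖)) := by
          field_simp
      _ ≤ (c * c) * wA A T := h2
      _ = wA A T * c ^ 2 := by ring

/-! ### A-selfadjoint: seminorm bounded by numerical radius -/

lemma vnormA_selfadj_le_wA_unit (hA : A.IsPositive) (hX : IsAAdjoint A X X) (y : H)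
    (hy : vnormA A y = 1) : vnormA A (X y) ≤ wA A X := by
  have hpol : ∀ u v : H,
      (innA A (X u) v).re ≤ wA A X * ((vnormA A u) ^ 2 + (vnormA A v) ^ 2) / 2 := by
    intro u v
    have hexp : innA A (X (u + v)) (u + v) - innA A (X (u - v)) (u - v)
        = 2 * innA A (X u) v + 2 * innA A (X v) u := by
      simp only [map_add, map_sub, innA_add_left, innA_add_right, innA_sub_left, innA_sub_right]
      ring
    have hconj : innA A (X v) u = (starRingEnd ℂ) (innA A (X u) v) := by
      rw [innA_move hA hX v u, innA_conj hA]
    rw [hconj] at hexp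
    have hre := congrArg Complex.re hexp
    simp only [Complex.sub_re, Complex.add_re, Complex.mul_re, Complex.conj_re, Complex.conj_im,
      Complex.re_ofNat, Complex.im_ofNat] at hre
    have h1 : (innA A (X (u + v)) (u + v)).re ≤ wA A X * vnormA A (u + v) ^ 2 :=
      (Complex.re_le_norm _).trans (abs_innA_le_wA hA hX (u + v))
    have h2 : -(innA A (X (u - v)) (u - v)).re ≤ wA A X * vnormA A (u - v) ^ 2 := by
      have := (abs_innA_le_wA hA hX (u - v))
      have h3 := neg_abs_le (innA A (X (u - v)) (u - v)).re
      calc -(innA A (X (u - v)) (u - v)).re ≤ |(innA A (X (u - v)) (u - v)).re| := by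
            exact neg_le_abs _
        _ ≤ ‖innA A (X (u - v)) (u - v)‖ := Complex.abs_re_le_norm _
        _ ≤ wA A X * vnormA A (u - v) ^ 2 := this
    have hpara := para hA u v
    have h3 : wA A X * vnormA A (u + v) ^ 2 + wA A X * vnormA A (u - v) ^ 2
        = wA A X * (2 * vnormA A u ^ 2 + 2 * vnormA A v ^ 2) := by
      rw [← mul_add, hpara]
    linarith [hre, h1, h2]
  rcases eq_or_lt_of_le (vnormA_nonneg A (X y)) with h0 | hpos
  · rw [← h0]
    exact wA_nonneg A X
  · set ny : ℝ := vnormA A (X y) with hny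
    have hre : (innA A (X y) (((ny⁻¹ : ℝ) : ℂ) • (X y))).re = ny := by
      rw [innA_smul_right, Complex.re_ofReal_mul, ← vnormA_sq hA, ← hny, sq]
      field_simp
    have hv : vnormA A (((ny⁻¹ : ℝ) : ℂ) • (X y)) = 1 := by
      rw [vnormA_smul hA, Complex.norm_real, Real.norm_eq_abs, abs_of_pos (inv_pos.2 hpos)]
      exact inv_mul_cancel₀ hpos.ne'
    have := hpol y (((ny⁻¹ : ℝ) : ℂ) • (X y))
    rw [hre, hv, hy] at this
    calc ny ≤ wA A X * (1 ^ 2 + 1 ^ 2) / 2 := this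
      _ = wA A X := by ring

lemma vnormA_selfadj_le_wA (hA : A.IsPositive) (hX : IsAAdjoint A X X) (y : H) :
    vnormA A (X y) ≤ wA A X * vnormA A y := by
  rcases eq_or_lt_of_le (vnormA_nonneg A y) with h0 | hpos
  · have h1 := vnormA_apply_le hA hX y
    rw [← h0, mul_zero] at h1
    have h2 : vnormA A (X y) = 0 := le_antisymm h1 (vnormA_nonneg A _)
    rw [h2, ← h0, mul_zero]
  · set c : ℝ := vnormA A y with hc
    have hunit : vnormA A (((c⁻¹ : ℝ) : ℂ) • y) = 1 := by
      rw [vnormA_smul hA, Complex.norm_real, Real.norm_eq_abs, abs_of_pos (inv_pos.2 hpos)]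
      exact inv_mul_cancel₀ hpos.ne'
    have hle := vnormA_selfadj_le_wA_unit hA hX _ hunit
    rw [map_smul, vnormA_smul hA, Complex.norm_real, Real.norm_eq_abs, abs_of_pos (inv_pos.2 hpos)] at hle
    have h2 := mul_le_mul_of_nonneg_left hle hpos.le
    rw [← mul_assoc, mul_inv_cancel₀ hpos.ne', one_mul] at h2
    rw [mul_comm]
    exact h2

/-! ### Rotations -/

lemma wA_rot_le (hA : A.IsPositive) (hT : IsAAdjoint A T Ts) (d : ℂ)
    (hd : ‖d‖ = 1) :
    wA A (ReA (d • T) ((starRingEnd ℂ d) • Ts)) ≤ wA A T := by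
  apply wA_le hA (wA_nonneg A T)
  intro z hz
  have hmove : innA A (Ts z) z = (starRingEnd ℂ) (innA A (T z) z) := by
    rw [innA_move hA (aadj_symm hA hT), innA_conj hA]
  have hval : innA A ((ReA (d • T) ((starRingEnd ℂ d) • Ts)) z) z
      = ((((starRingEnd ℂ) d) * innA A (T z) z).re : ℝ) := by
    simp only [ReA, ContinuousLinearMap.smul_apply, ContinuousLinearMap.add_apply,
      innA_smul_left, innA_add_left]
    rw [hmove]
    rw [show ((starRingEnd ℂ) d * innA A (T z) z
          + (starRingEnd ℂ) ((starRingEnd ℂ) d) * (starRingEnd ℂ) (innA A (T z) z))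
        = (((starRingEnd ℂ) d * innA A (T z) z)
          + (starRingEnd ℂ) ((starRingEnd ℂ) d * innA A (T z) z)) by rw [map_mul]]
    rw [Complex.add_conj]
    rw [show (starRingEnd ℂ) (2 : ℂ)⁻¹ = (2 : ℂ)⁻¹ by
      rw [map_inv₀, Complex.conj_ofNat]]
    push_cast
    ring
  rw [hval, Complex.norm_real, Real.norm_eq_abs]
  calc |(((starRingEnd ℂ) d) * innA A (T z) z).re|
      ≤ ‖(starRingEnd ℂ) d * innA A (T z) z‖ := Complex.abs_re_le_norm _
    _ = ‖innA A (T z) z‖ := by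
        rw [norm_mul, Complex.norm_conj, hd, one_mul]
    _ ≤ wA A T := le_csSup (bdd_w hA hT) ⟨z, hz, rfl⟩

lemma opnorm_ReIm_add_le (hA : A.IsPositive) (hT : IsAAdjoint A T Ts) :
    opnormA A (ReA T Ts + ImA T Ts) ≤ Real.sqrt 2 * wA A T := by
  have hwnn : (0:ℝ) ≤ Real.sqrt 2 * wA A T :=
    mul_nonneg (Real.sqrt_nonneg _) (wA_nonneg A T)
  apply opnormA_le hA hwnn
  intro y hy
  set s2 : ℂ := ((Real.sqrt 2 : ℝ) : ℂ) with hs2def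
  have hs2 : s2 ≠ 0 := by
    simp only [hs2def, ne_eq, Complex.ofReal_eq_zero]
    positivity
  set d : ℂ := (1 - Complex.I) / s2 with hddef
  have habs1mi : ‖1 - Complex.I‖ = Real.sqrt 2 := by
    rw [Complex.norm_def]
    congr 1
    simp [Complex.normSq_apply]
    norm_num
  have hd : ‖d‖ = 1 := by
    rw [hddef, norm_div, habs1mi, hs2def, Complex.norm_real, Real.norm_eq_abs,
      _root_.abs_of_nonneg (Real.sqrt_nonneg _), div_self]
    positivity
  have hcd : (starRingEnd ℂ) d = (1 + Complex.I) / s2 := by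
    rw [hddef, map_div₀, map_sub, map_one, Complex.conj_I, hs2def, Complex.conj_ofReal]
    ring
  have hvec : (ReA T Ts + ImA T Ts) y
      = s2 • ((ReA (d • T) ((starRingEnd ℂ d) • Ts)) y) := by
    simp only [ReA, ImA, ContinuousLinearMap.add_apply, ContinuousLinearMap.smul_apply,
      ContinuousLinearMap.sub_apply, hcd, hddef, mul_inv, Complex.inv_I]
    match_scalars
    · field_simp [hs2]
      try ring
    · rw [← hddef, hcd]
      field_simp [hs2]
      try ring
  rw [hvec, vnormA_smul hA, hs2def, Complex.norm_real, Real.norm_eq_abs, _root_.abs_of_nonneg (Real.sqrt_nonneg _)]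
  have hXsa : IsAAdjoint A (ReA (d • T) ((starRingEnd ℂ d) • Ts))
      (ReA (d • T) ((starRingEnd ℂ d) • Ts)) := ReA_isAAdjoint hA (aadj_smul hT d)
  have h1 : vnormA A ((ReA (d • T) ((starRingEnd ℂ d) • Ts)) y)
      ≤ wA A (ReA (d • T) ((starRingEnd ℂ d) • Ts)) :=
    vnormA_selfadj_le_wA_unit hA hXsa y hy
  have h2 := wA_rot_le hA hT d hd
  have := h1.trans h2
  exact mul_le_mul_of_nonneg_left this (Real.sqrt_nonneg _)

lemma opnorm_ReIm_sub_le (hA : A.IsPositive) (hT : IsAAdjoint A T Ts) :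
    opnormA A (ReA T Ts - ImA T Ts) ≤ Real.sqrt 2 * wA A T := by
  have hwnn : (0:ℝ) ≤ Real.sqrt 2 * wA A T :=
    mul_nonneg (Real.sqrt_nonneg _) (wA_nonneg A T)
  apply opnormA_le hA hwnn
  intro y hy
  set s2 : ℂ := ((Real.sqrt 2 : ℝ) : ℂ) with hs2def
  have hs2 : s2 ≠ 0 := by
    simp only [hs2def, ne_eq, Complex.ofReal_eq_zero]
    positivity
  set d : ℂ := (1 + Complex.I) / s2 with hddef
  have habs1pi : ‖1 + Complex.I‖ = Real.sqrt 2 := by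
    rw [Complex.norm_def]
    congr 1
    simp [Complex.normSq_apply]
    norm_num
  have hd : ‖d‖ = 1 := by
    rw [hddef, norm_div, habs1pi, hs2def, Complex.norm_real, Real.norm_eq_abs,
      _root_.abs_of_nonneg (Real.sqrt_nonneg _), div_self]
    positivity
  have hcd : (starRingEnd ℂ) d = (1 - Complex.I) / s2 := by
    rw [hddef, map_div₀, map_add, map_one, Complex.conj_I, hs2def, Complex.conj_ofReal]
    ring
  have hvec : (ReA T Ts - ImA T Ts) y
      = s2 • ((ReA (d • T) ((starRingEnd ℂ d) • Ts)) y) := by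
    simp only [ReA, ImA, ContinuousLinearMap.add_apply, ContinuousLinearMap.smul_apply,
      ContinuousLinearMap.sub_apply, hcd, hddef, mul_inv, Complex.inv_I]
    match_scalars
    · field_simp [hs2]
      try ring
    · rw [← hddef, hcd]
      field_simp [hs2]
      try ring
  rw [hvec, vnormA_smul hA, hs2def, Complex.norm_real, Real.norm_eq_abs, _root_.abs_of_nonneg (Real.sqrt_nonneg _)]
  have hXsa : IsAAdjoint A (ReA (d • T) ((starRingEnd ℂ d) • Ts))
      (ReA (d • T) ((starRingEnd ℂ d) • Ts)) := ReA_isAAdjoint hA (aadj_smul hT d)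
  have h1 : vnormA A ((ReA (d • T) ((starRingEnd ℂ d) • Ts)) y)
      ≤ wA A (ReA (d • T) ((starRingEnd ℂ d) • Ts)) :=
    vnormA_selfadj_le_wA_unit hA hXsa y hy
  have h2 := wA_rot_le hA hT d hd
  have := h1.trans h2
  exact mul_le_mul_of_nonneg_left this (Real.sqrt_nonneg _)

/-! ### Master pointwise bound -/

lemma vnormA_adj_le (hA : A.IsPositive) (hS : IsAAdjoint A S Ss) (y : H) :
    vnormA A (Ss y) ≤ opnormA A S * vnormA A y := by
  rcases eq_or_lt_of_le (vnormA_nonneg A (Ss y)) with h0 | hpos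
  · rw [← h0]
    exact mul_nonneg (opnormA_nonneg A S) (vnormA_nonneg A y)
  · set v : ℝ := vnormA A (Ss y) with hv
    have hsq : v ^ 2 = (innA A (Ss y) (Ss y)).re := vnormA_sq hA _
    have hmove : innA A (Ss y) (Ss y) = innA A y (S (Ss y)) :=
      innA_move hA (aadj_symm hA hS) y (Ss y)
    have h1 : (innA A y (S (Ss y))).re ≤ ‖innA A y (S (Ss y))‖ :=
      Complex.re_le_norm _
    have h2 : ‖innA A y (S (Ss y))‖ ≤ vnormA A y * vnormA A (S (Ss y)) :=
      abs_innA_le hA _ _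
    have h3 : vnormA A (S (Ss y)) ≤ opnormA A S * v := vnormA_op_le hA hS (Ss y)
    have h4 : v * v ≤ (opnormA A S * vnormA A y) * v := by
      have : v ^ 2 ≤ vnormA A y * (opnormA A S * v) := by
        rw [hsq, hmove]
        calc (innA A y (S (Ss y))).re ≤ vnormA A y * vnormA A (S (Ss y)) := h1.trans h2
          _ ≤ vnormA A y * (opnormA A S * v) :=
              mul_le_mul_of_nonneg_left h3 (vnormA_nonneg A y)
      nlinarith [this]
    exact le_of_mul_le_mul_right h4 hpos

lemma cs2 {a b c d : ℝ} (ha : 0 ≤ a) (hb : 0 ≤ b) (hc : 0 ≤ c) (hd : 0 ≤ d) :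
    a * c + b * d ≤ Real.sqrt (a ^ 2 + b ^ 2) * Real.sqrt (c ^ 2 + d ^ 2) := by
  rw [← Real.sqrt_mul (by positivity)]
  have hsq : (a * c + b * d) ^ 2 ≤ (a ^ 2 + b ^ 2) * (c ^ 2 + d ^ 2) := by
    nlinarith [sq_nonneg (a * d - b * c)]
  have h := Real.sqrt_le_sqrt hsq
  rwa [Real.sqrt_sq (by positivity)] at h

lemma expand_plus (hA : A.IsPositive) (p q hv kv : H) :
    (innA A (p + Complex.I • q) (hv - Complex.I • kv)
      + innA A (hv + Complex.I • kv) (p - Complex.I • q)).re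
    = 2 * (innA A p hv).re - 2 * (innA A q kv).re := by
  simp only [innA_add_left, innA_sub_right, innA_smul_left, innA_smul_right, Complex.conj_I]
  rw [innA_conj hA p hv, innA_conj hA q hv, innA_conj hA p kv, innA_conj hA q kv]
  simp only [Complex.add_re, Complex.sub_re, Complex.mul_re, Complex.mul_im, Complex.neg_re,
    Complex.neg_im, Complex.conj_re, Complex.conj_im, Complex.I_re, Complex.I_im,
    Complex.sub_im, Complex.add_im]
  ring

lemma expand_minus (hA : A.IsPositive) (p q hv kv : H) :
    (innA A (p + Complex.I • q) (hv - Complex.I • kv)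
      - innA A (hv + Complex.I • kv) (p - Complex.I • q)).re
    = 2 * (innA A q hv).im + 2 * (innA A p kv).im := by
  simp only [innA_add_left, innA_sub_right, innA_smul_left, innA_smul_right, Complex.conj_I]
  rw [innA_conj hA p hv, innA_conj hA q hv, innA_conj hA p kv, innA_conj hA q kv]
  simp only [Complex.add_re, Complex.sub_re, Complex.mul_re, Complex.mul_im, Complex.neg_re,
    Complex.neg_im, Complex.conj_re, Complex.conj_im, Complex.I_re, Complex.I_im,
    Complex.sub_im, Complex.add_im]
  ring

lemma pairing_bound (hA : A.IsPositive) (hT : IsAAdjoint A T Ts) (hS : IsAAdjoint A S Ss)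
    (x : H) (hx : vnormA A x = 1) (γ : ℂ) (hγ : ‖γ‖ = 1) :
    (vnormA A ((2:ℂ)⁻¹ • (S x + Ss x)) * vnormA A ((2:ℂ)⁻¹ • (γ • T x + (starRingEnd ℂ γ) • Ts x))
      + vnormA A ((2 * Complex.I)⁻¹ • (S x - Ss x))
        * vnormA A ((2 * Complex.I)⁻¹ • (γ • T x - (starRingEnd ℂ γ) • Ts x))
      ≤ Real.sqrt 2 * (opnormA A S * Real.sqrt (wA A T ^ 2 -
          |opnormA A (ReA T Ts + ImA T Ts) ^ 2 - opnormA A (ReA T Ts - ImA T Ts) ^ 2| / 4)))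
    ∧ (vnormA A ((2 * Complex.I)⁻¹ • (S x - Ss x))
        * vnormA A ((2:ℂ)⁻¹ • (γ • T x + (starRingEnd ℂ γ) • Ts x))
      + vnormA A ((2:ℂ)⁻¹ • (S x + Ss x))
        * vnormA A ((2 * Complex.I)⁻¹ • (γ • T x - (starRingEnd ℂ γ) • Ts x))
      ≤ Real.sqrt 2 * (opnormA A S * Real.sqrt (wA A T ^ 2 -
          |opnormA A (ReA T Ts + ImA T Ts) ^ 2 - opnormA A (ReA T Ts - ImA T Ts) ^ 2| / 4))) := by
  set np := vnormA A ((2:ℂ)⁻¹ • (S x + Ss x)) with hnp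
  set nq := vnormA A ((2 * Complex.I)⁻¹ • (S x - Ss x)) with hnq
  set nh := vnormA A ((2:ℂ)⁻¹ • (γ • T x + (starRingEnd ℂ γ) • Ts x)) with hnh
  set nk := vnormA A ((2 * Complex.I)⁻¹ • (γ • T x - (starRingEnd ℂ γ) • Ts x)) with hnk
  set NP := opnormA A (ReA T Ts + ImA T Ts) with hNP
  set NM := opnormA A (ReA T Ts - ImA T Ts) with hNM
  set oS := opnormA A S with hoS
  set w := wA A T with hw
  set B := w ^ 2 - |NP ^ 2 - NM ^ 2| / 4 with hB
  -- bound on np^2 + nq^2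
  have hSx : vnormA A (S x) ≤ oS := by
    have := vnormA_op_le hA hS x
    rwa [hx, mul_one] at this
  have hSsx : vnormA A (Ss x) ≤ oS := by
    have := vnormA_adj_le hA hS x
    rwa [hx, mul_one] at this
  have hpq : np ^ 2 + nq ^ 2 ≤ oS ^ 2 := by
    rw [hnp, hnq, halfsum hA]
    have h1 : vnormA A (S x) ^ 2 ≤ oS ^ 2 :=
      pow_le_pow_left₀ (vnormA_nonneg A _) hSx 2
    have h2 : vnormA A (Ss x) ^ 2 ≤ oS ^ 2 :=
      pow_le_pow_left₀ (vnormA_nonneg A _) hSsx 2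
    linarith
  -- bound on nh^2 + nk^2
  have hplusadj : IsAAdjoint A (ReA T Ts + ImA T Ts) (ReA T Ts + ImA T Ts) :=
    aadj_add (ReA_isAAdjoint hA hT) (ImA_isAAdjoint hA hT)
  have hminusadj : IsAAdjoint A (ReA T Ts - ImA T Ts) (ReA T Ts - ImA T Ts) :=
    aadj_sub (ReA_isAAdjoint hA hT) (ImA_isAAdjoint hA hT)
  have hNPle : vnormA A ((ReA T Ts + ImA T Ts) x) ≤ NP := by
    have := vnormA_op_le hA hplusadj x
    rwa [hx, mul_one] at this
  have hNMle : vnormA A ((ReA T Ts - ImA T Ts) x) ≤ NM := by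
    have := vnormA_op_le hA hminusadj x
    rwa [hx, mul_one] at this
  have hplusapp : (ReA T Ts + ImA T Ts) x
      = (2:ℂ)⁻¹ • (T x + Ts x) + (2 * Complex.I)⁻¹ • (T x - Ts x) := by
    simp [ReA, ImA]
  have hminusapp : (ReA T Ts - ImA T Ts) x
      = (2:ℂ)⁻¹ • (T x + Ts x) - (2 * Complex.I)⁻¹ • (T x - Ts x) := by
    simp [ReA, ImA]
  have hsum : vnormA A ((ReA T Ts + ImA T Ts) x) ^ 2 + vnormA A ((ReA T Ts - ImA T Ts) x) ^ 2
      = vnormA A (T x) ^ 2 + vnormA A (Ts x) ^ 2 := by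
    rw [hplusapp, hminusapp, para hA]
    have := halfsum hA (T x) (Ts x)
    linarith
  have hhk : nh ^ 2 + nk ^ 2 = (vnormA A (T x) ^ 2 + vnormA A (Ts x) ^ 2) / 2 := by
    rw [hnh, hnk, halfsum hA, vnormA_smul hA, vnormA_smul hA, Complex.norm_conj, hγ,
      one_mul, one_mul]
  have hhk2 : nh ^ 2 + nk ^ 2 ≤ (NP ^ 2 + NM ^ 2) / 2 := by
    rw [hhk, ← hsum]
    have h1 : vnormA A ((ReA T Ts + ImA T Ts) x) ^ 2 ≤ NP ^ 2 :=
      pow_le_pow_left₀ (vnormA_nonneg A _) hNPle 2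
    have h2 : vnormA A ((ReA T Ts - ImA T Ts) x) ^ 2 ≤ NM ^ 2 :=
      pow_le_pow_left₀ (vnormA_nonneg A _) hNMle 2
    linarith
  -- (NP^2 + NM^2)/2 ≤ 2 * B
  have hNPb : NP ≤ Real.sqrt 2 * w := opnorm_ReIm_add_le hA hT
  have hNMb : NM ≤ Real.sqrt 2 * w := opnorm_ReIm_sub_le hA hT
  have hNP2 : NP ^ 2 ≤ 2 * w ^ 2 := by
    have := pow_le_pow_left₀ (opnormA_nonneg A _) hNPb 2
    rwa [mul_pow, Real.sq_sqrt (by norm_num : (0:ℝ) ≤ 2)] at this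
  have hNM2 : NM ^ 2 ≤ 2 * w ^ 2 := by
    have := pow_le_pow_left₀ (opnormA_nonneg A _) hNMb 2
    rwa [mul_pow, Real.sq_sqrt (by norm_num : (0:ℝ) ≤ 2)] at this
  have hP3 : (NP ^ 2 + NM ^ 2) / 2 ≤ 2 * B := by
    rw [hB]
    rcases abs_cases (NP ^ 2 - NM ^ 2) with ⟨he, _⟩ | ⟨he, _⟩ <;> rw [he] <;> linarith
  have hhkB : nh ^ 2 + nk ^ 2 ≤ 2 * B := hhk2.trans hP3
  -- square roots
  have hnpnn : 0 ≤ np := vnormA_nonneg A _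
  have hnqnn : 0 ≤ nq := vnormA_nonneg A _
  have hnhnn : 0 ≤ nh := vnormA_nonneg A _
  have hnknn : 0 ≤ nk := vnormA_nonneg A _
  have hsq1 : Real.sqrt (np ^ 2 + nq ^ 2) ≤ oS := by
    have h := Real.sqrt_le_sqrt hpq
    rwa [Real.sqrt_sq (opnormA_nonneg A S)] at h
  have hsq2 : Real.sqrt (nh ^ 2 + nk ^ 2) ≤ Real.sqrt 2 * Real.sqrt B := by
    have h := Real.sqrt_le_sqrt hhkB
    rwa [Real.sqrt_mul (by norm_num : (0:ℝ) ≤ 2)] at h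
  have hchain : Real.sqrt (np ^ 2 + nq ^ 2) * Real.sqrt (nh ^ 2 + nk ^ 2)
      ≤ Real.sqrt 2 * (oS * Real.sqrt B) := by
    calc Real.sqrt (np ^ 2 + nq ^ 2) * Real.sqrt (nh ^ 2 + nk ^ 2)
        ≤ oS * (Real.sqrt 2 * Real.sqrt B) :=
          mul_le_mul hsq1 hsq2 (Real.sqrt_nonneg _) (opnormA_nonneg A S)
      _ = Real.sqrt 2 * (oS * Real.sqrt B) := by ring
  constructor
  · exact (cs2 hnpnn hnqnn hnhnn hnknn).trans hchain
  · have h := cs2 hnqnn hnpnn hnhnn hnknn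
    calc nq * nh + np * nk ≤ Real.sqrt (nq ^ 2 + np ^ 2) * Real.sqrt (nh ^ 2 + nk ^ 2) := h
      _ = Real.sqrt (np ^ 2 + nq ^ 2) * Real.sqrt (nh ^ 2 + nk ^ 2) := by rw [add_comm (nq ^2)]
      _ ≤ Real.sqrt 2 * (oS * Real.sqrt B) := hchain

lemma master_plus (hA : A.IsPositive) (hT : IsAAdjoint A T Ts) (hS : IsAAdjoint A S Ss)
    (x : H) (hx : vnormA A x = 1) :
    ‖innA A (T (S x) + S (T x)) x‖
      ≤ 2 * Real.sqrt 2 * (opnormA A S * Real.sqrt (wA A T ^ 2 -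
          |opnormA A (ReA T Ts + ImA T Ts) ^ 2 - opnormA A (ReA T Ts - ImA T Ts) ^ 2| / 4)) := by
  set ζ := innA A (T (S x) + S (T x)) x with hζ
  obtain ⟨γ, hγ, hγζ⟩ : ∃ γ : ℂ, ‖γ‖ = 1
      ∧ (starRingEnd ℂ) γ * ζ = ((‖ζ‖ : ℝ) : ℂ) := by
    rcases eq_or_ne ζ 0 with h0 | h0
    · exact ⟨1, by simp, by simp [h0]⟩
    · refine ⟨ζ / ((‖ζ‖ : ℝ) : ℂ), ?_, ?_⟩
      · rw [norm_div, Complex.norm_real, Real.norm_eq_abs, _root_.abs_of_nonneg (norm_nonneg _),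
          div_self (norm_ne_zero_iff.mpr h0)]
      · rw [map_div₀, Complex.conj_ofReal, div_mul_eq_mul_div, mul_comm,
          Complex.mul_conj, Complex.normSq_eq_norm_sq]
        rw [div_eq_iff (by exact_mod_cast norm_ne_zero_iff.mpr h0)]
        push_cast
        ring
  set p := (2:ℂ)⁻¹ • (S x + Ss x) with hp
  set q := (2 * Complex.I)⁻¹ • (S x - Ss x) with hq
  set hv := (2:ℂ)⁻¹ • (γ • T x + (starRingEnd ℂ γ) • Ts x) with hhv
  set kv := (2 * Complex.I)⁻¹ • (γ • T x - (starRingEnd ℂ γ) • Ts x) with hkv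
  have hSx : S x = p + Complex.I • q := (recompose (S x) (Ss x)).symm
  have hSsx : Ss x = p - Complex.I • q := (recompose' (S x) (Ss x)).symm
  have hTx : γ • T x = hv + Complex.I • kv :=
    (recompose (γ • T x) ((starRingEnd ℂ γ) • Ts x)).symm
  have hTsx : (starRingEnd ℂ γ) • Ts x = hv - Complex.I • kv :=
    (recompose' (γ • T x) ((starRingEnd ℂ γ) • Ts x)).symm
  have hident : (starRingEnd ℂ) γ * ζ
      = innA A (p + Complex.I • q) (hv - Complex.I • kv)
        + innA A (hv + Complex.I • kv) (p - Complex.I • q) := by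
    rw [hζ, innA_add_left, mul_add]
    congr 1
    · rw [innA_move hA hT (S x) x, ← innA_smul_right, hTsx, hSx]
    · rw [innA_move hA hS (T x) x, ← innA_smul_left, hTx, hSsx]
  have habs : (‖ζ‖ : ℝ) = ((starRingEnd ℂ) γ * ζ).re := by
    rw [hγζ, Complex.ofReal_re]
  have hexp := expand_plus hA p q hv kv
  have ha := (Complex.re_le_norm (innA A p hv)).trans (abs_innA_le hA p hv)
  have hd : -(innA A q kv).re ≤ vnormA A q * vnormA A kv :=
    (neg_le_abs _).trans ((Complex.abs_re_le_norm _).trans (abs_innA_le hA q kv))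
  have hfinal : ‖ζ‖
      ≤ 2 * (vnormA A p * vnormA A hv + vnormA A q * vnormA A kv) := by
    rw [habs, hident, hexp]
    linarith
  obtain ⟨hb1, _⟩ := pairing_bound hA hT hS x hx γ hγ
  rw [← hp, ← hq, ← hhv, ← hkv] at hb1
  calc ‖ζ‖ ≤ 2 * (vnormA A p * vnormA A hv + vnormA A q * vnormA A kv) := hfinal
    _ ≤ 2 * (Real.sqrt 2 * (opnormA A S * Real.sqrt (wA A T ^ 2 -
          |opnormA A (ReA T Ts + ImA T Ts) ^ 2 - opnormA A (ReA T Ts - ImA T Ts) ^ 2| / 4))) := by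
        linarith
    _ = 2 * Real.sqrt 2 * (opnormA A S * Real.sqrt (wA A T ^ 2 -
          |opnormA A (ReA T Ts + ImA T Ts) ^ 2 - opnormA A (ReA T Ts - ImA T Ts) ^ 2| / 4)) := by
        ring

lemma master_minus (hA : A.IsPositive) (hT : IsAAdjoint A T Ts) (hS : IsAAdjoint A S Ss)
    (x : H) (hx : vnormA A x = 1) :
    ‖innA A (T (S x) - S (T x)) x‖
      ≤ 2 * Real.sqrt 2 * (opnormA A S * Real.sqrt (wA A T ^ 2 -
          |opnormA A (ReA T Ts + ImA T Ts) ^ 2 - opnormA A (ReA T Ts - ImA T Ts) ^ 2| / 4)) := by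
  set ζ := innA A (T (S x) - S (T x)) x with hζ
  obtain ⟨γ, hγ, hγζ⟩ : ∃ γ : ℂ, ‖γ‖ = 1
      ∧ (starRingEnd ℂ) γ * ζ = ((‖ζ‖ : ℝ) : ℂ) := by
    rcases eq_or_ne ζ 0 with h0 | h0
    · exact ⟨1, by simp, by simp [h0]⟩
    · refine ⟨ζ / ((‖ζ‖ : ℝ) : ℂ), ?_, ?_⟩
      · rw [norm_div, Complex.norm_real, Real.norm_eq_abs, _root_.abs_of_nonneg (norm_nonneg _),
          div_self (norm_ne_zero_iff.mpr h0)]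
      · rw [map_div₀, Complex.conj_ofReal, div_mul_eq_mul_div, mul_comm,
          Complex.mul_conj, Complex.normSq_eq_norm_sq]
        rw [div_eq_iff (by exact_mod_cast norm_ne_zero_iff.mpr h0)]
        push_cast
        ring
  set p := (2:ℂ)⁻¹ • (S x + Ss x) with hp
  set q := (2 * Complex.I)⁻¹ • (S x - Ss x) with hq
  set hv := (2:ℂ)⁻¹ • (γ • T x + (starRingEnd ℂ γ) • Ts x) with hhv
  set kv := (2 * Complex.I)⁻¹ • (γ • T x - (starRingEnd ℂ γ) • Ts x) with hkv
  have hSx : S x = p + Complex.I • q := (recompose (S x) (Ss x)).symm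
  have hSsx : Ss x = p - Complex.I • q := (recompose' (S x) (Ss x)).symm
  have hTx : γ • T x = hv + Complex.I • kv :=
    (recompose (γ • T x) ((starRingEnd ℂ γ) • Ts x)).symm
  have hTsx : (starRingEnd ℂ γ) • Ts x = hv - Complex.I • kv :=
    (recompose' (γ • T x) ((starRingEnd ℂ γ) • Ts x)).symm
  have hident : (starRingEnd ℂ) γ * ζ
      = innA A (p + Complex.I • q) (hv - Complex.I • kv)
        - innA A (hv + Complex.I • kv) (p - Complex.I • q) := by
    rw [hζ, innA_sub_left, mul_sub]
    congr 1
    · rw [innA_move hA hT (S x) x, ← innA_smul_right, hTsx, hSx]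
    · rw [innA_move hA hS (T x) x, ← innA_smul_left, hTx, hSsx]
  have habs : (‖ζ‖ : ℝ) = ((starRingEnd ℂ) γ * ζ).re := by
    rw [hγζ, Complex.ofReal_re]
  have hexp := expand_minus hA p q hv kv
  have hb := (Complex.im_le_norm (innA A q hv)).trans (abs_innA_le hA q hv)
  have hc := (Complex.im_le_norm (innA A p kv)).trans (abs_innA_le hA p kv)
  have hfinal : ‖ζ‖
      ≤ 2 * (vnormA A q * vnormA A hv + vnormA A p * vnormA A kv) := by
    rw [habs, hident, hexp]
    linarith
  obtain ⟨_, hb2⟩ := pairing_bound hA hT hS x hx γ hγ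
  rw [← hp, ← hq, ← hhv, ← hkv] at hb2
  calc ‖ζ‖ ≤ 2 * (vnormA A q * vnormA A hv + vnormA A p * vnormA A kv) := hfinal
    _ ≤ 2 * (Real.sqrt 2 * (opnormA A S * Real.sqrt (wA A T ^ 2 -
          |opnormA A (ReA T Ts + ImA T Ts) ^ 2 - opnormA A (ReA T Ts - ImA T Ts) ^ 2| / 4))) := by
        linarith
    _ = 2 * Real.sqrt 2 * (opnormA A S * Real.sqrt (wA A T ^ 2 -
          |opnormA A (ReA T Ts + ImA T Ts) ^ 2 - opnormA A (ReA T Ts - ImA T Ts) ^ 2| / 4)) := by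
        ring

end Stmt19Aux

open Stmt19Aux in
theorem stmt19 (A T Ts S Ss : H →L[ℂ] H) (hA : A.IsPositive)
    (hT : IsAAdjoint A T Ts) (hS : IsAAdjoint A S Ss) :
    wA A (T.comp S + S.comp T) ≤
        2 * Real.sqrt 2 *
          min (opnormA A S *
              Real.sqrt (wA A T ^ 2 -
                |opnormA A (ReA T Ts + ImA T Ts) ^ 2 - opnormA A (ReA T Ts - ImA T Ts) ^ 2| / 4))
            (opnormA A T *
              Real.sqrt (wA A S ^ 2 -
                |opnormA A (ReA S Ss + ImA S Ss) ^ 2 - opnormA A (ReA S Ss - ImA S Ss) ^ 2| / 4)) ∧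
      wA A (T.comp S - S.comp T) ≤
        2 * Real.sqrt 2 *
          min (opnormA A S *
              Real.sqrt (wA A T ^ 2 -
                |opnormA A (ReA T Ts + ImA T Ts) ^ 2 - opnormA A (ReA T Ts - ImA T Ts) ^ 2| / 4))
            (opnormA A T *
              Real.sqrt (wA A S ^ 2 -
                |opnormA A (ReA S Ss + ImA S Ss) ^ 2 - opnormA A (ReA S Ss - ImA S Ss) ^ 2| / 4)) := by
  set β₁ := opnormA A S * Real.sqrt (wA A T ^ 2 -
    |opnormA A (ReA T Ts + ImA T Ts) ^ 2 - opnormA A (ReA T Ts - ImA T Ts) ^ 2| / 4) with hβ₁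
  set β₂ := opnormA A T * Real.sqrt (wA A S ^ 2 -
    |opnormA A (ReA S Ss + ImA S Ss) ^ 2 - opnormA A (ReA S Ss - ImA S Ss) ^ 2| / 4) with hβ₂
  have hβ₁nn : 0 ≤ β₁ := mul_nonneg (opnormA_nonneg A S) (Real.sqrt_nonneg _)
  have hβ₂nn : 0 ≤ β₂ := mul_nonneg (opnormA_nonneg A T) (Real.sqrt_nonneg _)
  have hRHSnn : 0 ≤ 2 * Real.sqrt 2 * min β₁ β₂ := by
    apply mul_nonneg
    · positivity
    · exact le_min hβ₁nn hβ₂nn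
  constructor
  · apply Real.sSup_le _ hRHSnn
    rintro r ⟨x, hx, rfl⟩
    have happ : (T.comp S + S.comp T) x = T (S x) + S (T x) := by
      simp
    rw [happ]
    have h1 := master_plus hA hT hS x hx
    have h2 := master_plus hA hS hT x hx
    rw [add_comm (S (T x)) (T (S x))] at h2
    rcases min_cases β₁ β₂ with ⟨hmin, _⟩ | ⟨hmin, _⟩ <;> rw [hmin]
    · exact h1
    · exact h2
  · apply Real.sSup_le _ hRHSnn
    rintro r ⟨x, hx, rfl⟩
    have happ : (T.comp S - S.comp T) x = T (S x) - S (T x) := by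
      simp
    rw [happ]
    have h1 := master_minus hA hT hS x hx
    have h2 := master_minus hA hS hT x hx
    have hneg : innA A (S (T x) - T (S x)) x = - innA A (T (S x) - S (T x)) x := by
      rw [← innA_neg_left]
      congr 1
      abel
    rw [hneg, norm_neg] at h2
    rcases min_cases β₁ β₂ with ⟨hmin, _⟩ | ⟨hmin, _⟩ <;> rw [hmin]
    · exact h1
    · exact h2
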